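/- In the Shortest Walk reduction graph G', every walk of length T = m + 4 from node 1 to node 2 has total weight equal to w(u,v_1) + w(v_1,v_2) + w(v_2,u) − C for some triangle (u, v_1, v_2) ∈ U × V_1 × V_2 of the original graph G, and conversely every such triangle gives rise to such a walk; hence the minimum weight of a length-T walk from 1 to 2 equals (minimum triangle weight of G) − C. -/

import Mathlib

/-- Vertices of the Shortest Walk reduction graph `G'`:
node 1, node 2, `V₁`, `V₂`, the path `P` through `U`, and the copy path `P'` through `U'`. -/
inductive WalkState (n n' m : ℕ) where
  | one
  | two
  | v1 (v : Fin n)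
  | v2 (v : Fin n')
  | pu (u : Fin m)        -- U, on the zero-weight path P starting at node 1
  | pu' (u : Fin m)       -- U', on the path P' ending at node 2
  deriving DecidableEq

/-- Edge-weight matrix of `G'` (`⊤` for non-edges); the final edge of `P'` into node 2
has weight `-C`. -/
noncomputable def walkA {n n' m : ℕ}
    (wu1 : Fin m → Fin n → ℝ)      -- weights of edges between U and V₁
    (w12 : Fin n → Fin n' → ℝ)     -- weights of edges between V₁ and V₂
    (w2u : Fin n' → Fin m → ℝ)     -- weights of edges between V₂ and U
    (C : ℝ) : WalkState n n' m → WalkState n n' m → EReal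
  | .one, .pu u => if (u : ℕ) = 0 then 0 else ⊤
  | .pu u, .pu u' => if (u' : ℕ) = (u : ℕ) + 1 then 0 else ⊤
  | .pu u, .v1 v => (wu1 u v : EReal)
  | .v1 v, .v2 v' => (w12 v v' : EReal)
  | .v2 v, .pu' u => (w2u v u : EReal)
  | .pu' u, .pu' u' => if (u' : ℕ) = (u : ℕ) + 1 then 0 else ⊤
  | .pu' u, .two => if (u : ℕ) = m - 1 then ((-C : ℝ) : EReal) else ⊤
  | _, _ => ⊤


lemma walkA_ne_bot {n n' m : ℕ} (wu1 : Fin m → Fin n → ℝ) (w12 : Fin n → Fin n' → ℝ)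
    (w2u : Fin n' → Fin m → ℝ) (C : ℝ) (s s' : WalkState n n' m) :
    walkA wu1 w12 w2u C s s' ≠ ⊥ := by
  cases s <;> cases s' <;> simp [walkA] <;> split_ifs <;> simp

lemma sum_ne_bot {N : ℕ} {f : ℕ → EReal} (hb : ∀ t, f t ≠ ⊥) :
    ∑ t ∈ Finset.range N, f t ≠ ⊥ := by
  induction N with
  | zero => simp
  | succ N ih =>
    rw [Finset.sum_range_succ]
    simp only [ne_eq, EReal.add_eq_bot_iff]
    tauto

lemma sum_terms_ne_top {N : ℕ} {f : ℕ → EReal} (hb : ∀ t, f t ≠ ⊥)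
    (h : ∑ t ∈ Finset.range N, f t ≠ ⊤) : ∀ t < N, f t ≠ ⊤ := by
  induction N with
  | zero => omega
  | succ N ih =>
    rw [Finset.sum_range_succ] at h
    have h1 : ∑ t ∈ Finset.range N, f t ≠ ⊤ := by
      intro hc; rw [hc] at h
      exact h (EReal.top_add_of_ne_bot (hb N))
    have h2 : f N ≠ ⊤ := by
      intro hc; rw [hc] at h
      exact h (EReal.add_top_of_ne_bot (sum_ne_bot hb))
    intro t ht
    rcases Nat.lt_or_ge t N with h' | h'
    · exact ih h1 t h'
    · have : t = N := by omega
      rwa [this]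

lemma sum_four {N i1 i2 i3 i4 : ℕ} (c1 c2 c3 c4 : EReal)
    (h1 : i1 < N) (h2 : i2 < N) (h3 : i3 < N) (h4 : i4 < N)
    (d12 : i1 ≠ i2) (d13 : i1 ≠ i3) (d14 : i1 ≠ i4)
    (d23 : i2 ≠ i3) (d24 : i2 ≠ i4) (d34 : i3 ≠ i4) :
    (∑ t ∈ Finset.range N,
      (if t = i1 then c1 else if t = i2 then c2 else if t = i3 then c3
        else if t = i4 then c4 else 0)) = c1 + c2 + c3 + c4 := by
  have key : ∀ t, (if t = i1 then c1 else if t = i2 then c2 else if t = i3 then c3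
        else if t = i4 then c4 else 0)
      = (if t = i1 then c1 else 0) + ((if t = i2 then c2 else 0)
        + ((if t = i3 then c3 else 0) + (if t = i4 then c4 else 0))) := by
    intro t
    split_ifs <;> simp_all <;> omega
  simp only [key, Finset.sum_add_distrib, Finset.sum_ite_eq', Finset.mem_range,
    h1, h2, h3, h4, if_true]
  abel

def canonWalk {n n' m : ℕ} (uu : Fin m) (x : Fin n) (y : Fin n') : ℕ → WalkState n n' m :=
  fun t =>
    if _h0 : t = 0 then .one
    else if h1 : t ≤ (uu : ℕ) + 1 then .pu ⟨t - 1, by have := uu.isLt; omega⟩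
    else if _h2 : t = (uu : ℕ) + 2 then .v1 x
    else if _h3 : t = (uu : ℕ) + 3 then .v2 y
    else if h4 : t ≤ m + 3 then .pu' ⟨t - 4, by have := uu.isLt; omega⟩
    else .two

lemma sum_canon {n n' m : ℕ} (wu1 : Fin m → Fin n → ℝ) (w12 : Fin n → Fin n' → ℝ)
    (w2u : Fin n' → Fin m → ℝ) (C : ℝ) (uu : Fin m) (x : Fin n) (y : Fin n')
    (u : ℕ → WalkState n n' m) (hu : ∀ t ≤ m + 4, u t = canonWalk uu x y t) :
    ∑ t ∈ Finset.range (m + 4), walkA wu1 w12 w2u C (u t) (u (t + 1))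
      = ((wu1 uu x + w12 x y + w2u y uu - C : ℝ) : EReal) := by
  have huu := uu.isLt
  have hval : ∀ t < m + 4, walkA wu1 w12 w2u C (u t) (u (t + 1))
      = (if t = (uu : ℕ) + 1 then (wu1 uu x : EReal)
        else if t = (uu : ℕ) + 2 then (w12 x y : EReal)
        else if t = (uu : ℕ) + 3 then (w2u y uu : EReal)
        else if t = m + 3 then ((-C : ℝ) : EReal) else 0) := by
    intro t ht
    rw [hu t (by omega), hu (t + 1) (by omega)]
    rcases Nat.lt_or_ge t 1 with hc | hc
    · -- t = 0
      have h0 : t = 0 := by omega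
      subst h0
      have e1 : canonWalk (m := m) (n := n) (n' := n') uu x y 0 = .one := by
        simp [canonWalk]
      have e2 : canonWalk (m := m) (n := n) (n' := n') uu x y 1 = .pu ⟨0, by omega⟩ := by
        simp [canonWalk]
      rw [e1, e2, if_neg (show ¬ (0 = (uu : ℕ) + 1) by omega),
        if_neg (show ¬ (0 = (uu : ℕ) + 2) by omega),
        if_neg (show ¬ (0 = (uu : ℕ) + 3) by omega),
        if_neg (show ¬ (0 = m + 3) by omega)]
      simp [walkA]
    · rcases Nat.lt_or_ge t ((uu : ℕ) + 1) with hc2 | hc2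
      · -- 1 ≤ t ≤ uu
        have e1 : canonWalk (m := m) (n := n) (n' := n') uu x y t
            = .pu ⟨t - 1, by omega⟩ := by
          have ha : ¬ (t = 0) := by omega
          have hb : t ≤ (uu : ℕ) + 1 := by omega
          simp [canonWalk, ha, hb]
        have e2 : canonWalk (m := m) (n := n) (n' := n') uu x y (t + 1)
            = .pu ⟨t, by omega⟩ := by
          have ha : ¬ (t + 1 = 0) := by omega
          have hb : t + 1 ≤ (uu : ℕ) + 1 := by omega
          simp [canonWalk, ha, hb]
        rw [e1, e2, if_neg (show ¬ (t = (uu : ℕ) + 1) by omega),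
          if_neg (show ¬ (t = (uu : ℕ) + 2) by omega),
          if_neg (show ¬ (t = (uu : ℕ) + 3) by omega),
          if_neg (show ¬ (t = m + 3) by omega)]
        simp only [walkA]
        rw [if_pos (show t = t - 1 + 1 by omega)]
      · rcases Nat.eq_or_lt_of_le hc2 with hc3 | hc3
        · -- t = uu + 1
          have e1 : canonWalk (m := m) (n := n) (n' := n') uu x y t
              = .pu ⟨t - 1, by omega⟩ := by
            have ha : ¬ (t = 0) := by omega
            have hb : t ≤ (uu : ℕ) + 1 := by omega
            simp [canonWalk, ha, hb]
          have e2 : canonWalk (m := m) (n := n) (n' := n') uu x y (t + 1) = .v1 x := by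
            have ha : ¬ (t + 1 = 0) := by omega
            have hb : ¬ (t + 1 ≤ (uu : ℕ) + 1) := by omega
            have hcc : t + 1 = (uu : ℕ) + 2 := by omega
            simp [canonWalk, ha, hb, hcc]
          rw [e1, e2, if_pos hc3.symm]
          simp only [walkA]
          have : (⟨t - 1, by omega⟩ : Fin m) = uu := by
            apply Fin.ext; simp; omega
          rw [this]
        · rcases Nat.lt_or_ge t ((uu : ℕ) + 3) with hc4 | hc4
          · -- t = uu + 2
            have ht2 : t = (uu : ℕ) + 2 := by omega
            have e1 : canonWalk (m := m) (n := n) (n' := n') uu x y t = .v1 x := by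
              have ha : ¬ (t = 0) := by omega
              have hb : ¬ (t ≤ (uu : ℕ) + 1) := by omega
              simp [canonWalk, ha, hb, ht2]
            have e2 : canonWalk (m := m) (n := n) (n' := n') uu x y (t + 1) = .v2 y := by
              have ha : ¬ (t + 1 = 0) := by omega
              have hb : ¬ (t + 1 ≤ (uu : ℕ) + 1) := by omega
              have hcc : ¬ (t + 1 = (uu : ℕ) + 2) := by omega
              have hd : t + 1 = (uu : ℕ) + 3 := by omega
              simp [canonWalk, ha, hb, hcc, hd]
            rw [e1, e2, if_neg (show ¬ (t = (uu : ℕ) + 1) by omega), if_pos ht2]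
            simp only [walkA]
          · rcases Nat.eq_or_lt_of_le hc4 with hc5 | hc5
            · -- t = uu + 3
              have ht3 : t = (uu : ℕ) + 3 := hc5.symm
              have e1 : canonWalk (m := m) (n := n) (n' := n') uu x y t = .v2 y := by
                have ha : ¬ (t = 0) := by omega
                have hb : ¬ (t ≤ (uu : ℕ) + 1) := by omega
                have hcc : ¬ (t = (uu : ℕ) + 2) := by omega
                simp [canonWalk, ha, hb, hcc, ht3]
              have e2 : canonWalk (m := m) (n := n) (n' := n') uu x y (t + 1)
                  = .pu' ⟨t + 1 - 4, by omega⟩ := by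
                have ha : ¬ (t + 1 = 0) := by omega
                have hb : ¬ (t + 1 ≤ (uu : ℕ) + 1) := by omega
                have hcc : ¬ (t + 1 = (uu : ℕ) + 2) := by omega
                have hd : ¬ (t + 1 = (uu : ℕ) + 3) := by omega
                have he : t + 1 ≤ m + 3 := by omega
                simp [canonWalk, ha, hb, hcc, hd, he, (show ¬ t = (uu : ℕ) + 1 by omega), (show ¬ t = (uu : ℕ) + 2 by omega)]
              rw [e1, e2, if_neg (show ¬ (t = (uu : ℕ) + 1) by omega),
                if_neg (show ¬ (t = (uu : ℕ) + 2) by omega), if_pos ht3]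
              simp only [walkA]
              have : (⟨t + 1 - 4, by omega⟩ : Fin m) = uu := by
                apply Fin.ext; simp; omega
              rw [this]
            · rcases Nat.lt_or_ge t (m + 3) with hc6 | hc6
              · -- uu + 4 ≤ t ≤ m + 2
                have e1 : canonWalk (m := m) (n := n) (n' := n') uu x y t
                    = .pu' ⟨t - 4, by omega⟩ := by
                  have ha : ¬ (t = 0) := by omega
                  have hb : ¬ (t ≤ (uu : ℕ) + 1) := by omega
                  have hcc : ¬ (t = (uu : ℕ) + 2) := by omega
                  have hd : ¬ (t = (uu : ℕ) + 3) := by omega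
                  have he : t ≤ m + 3 := by omega
                  simp [canonWalk, ha, hb, hcc, hd, he]
                have e2 : canonWalk (m := m) (n := n) (n' := n') uu x y (t + 1)
                    = .pu' ⟨t - 3, by omega⟩ := by
                  have ha : ¬ (t + 1 = 0) := by omega
                  have hb : ¬ (t + 1 ≤ (uu : ℕ) + 1) := by omega
                  have hcc : ¬ (t + 1 = (uu : ℕ) + 2) := by omega
                  have hd : ¬ (t + 1 = (uu : ℕ) + 3) := by omega
                  have he : t + 1 ≤ m + 3 := by omega
                  simp [canonWalk, ha, hb, hcc, hd, he, (show ¬ t = (uu : ℕ) + 1 by omega), (show ¬ t = (uu : ℕ) + 2 by omega)]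
                rw [e1, e2, if_neg (show ¬ (t = (uu : ℕ) + 1) by omega),
                  if_neg (show ¬ (t = (uu : ℕ) + 2) by omega),
                  if_neg (show ¬ (t = (uu : ℕ) + 3) by omega),
                  if_neg (show ¬ (t = m + 3) by omega)]
                simp only [walkA]
                rw [if_pos (show t - 3 = t - 4 + 1 by omega)]
              · -- t = m + 3
                have ht3 : t = m + 3 := by omega
                have e1 : canonWalk (m := m) (n := n) (n' := n') uu x y t
                    = .pu' ⟨t - 4, by omega⟩ := by
                  have ha : ¬ (t = 0) := by omega
                  have hb : ¬ (t ≤ (uu : ℕ) + 1) := by omega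
                  have hcc : ¬ (t = (uu : ℕ) + 2) := by omega
                  have hd : ¬ (t = (uu : ℕ) + 3) := by omega
                  have he : t ≤ m + 3 := by omega
                  simp [canonWalk, ha, hb, hcc, hd, he]
                have e2 : canonWalk (m := m) (n := n) (n' := n') uu x y (t + 1) = .two := by
                  have ha : ¬ (t + 1 = 0) := by omega
                  have hb : ¬ (t + 1 ≤ (uu : ℕ) + 1) := by omega
                  have hcc : ¬ (t + 1 = (uu : ℕ) + 2) := by omega
                  have hd : ¬ (t + 1 = (uu : ℕ) + 3) := by omega
                  have he : ¬ (t + 1 ≤ m + 3) := by omega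
                  simp [canonWalk, ha, hb, hcc, hd, he, (show ¬ t = (uu : ℕ) + 1 by omega), (show ¬ t = (uu : ℕ) + 2 by omega)]
                rw [e1, e2, if_neg (show ¬ (t = (uu : ℕ) + 1) by omega),
                  if_neg (show ¬ (t = (uu : ℕ) + 2) by omega),
                  if_neg (show ¬ (t = (uu : ℕ) + 3) by omega),
                  if_pos ht3]
                simp only [walkA]
                rw [if_pos (show t - 4 = m - 1 by omega)]
  rw [Finset.sum_congr rfl (fun t ht => hval t (Finset.mem_range.mp ht))]
  rw [sum_four (wu1 uu x : EReal) (w12 x y : EReal) (w2u y uu : EReal) ((-C : ℝ) : EReal)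
    (by omega) (by omega) (by omega) (by omega)
    (by omega) (by omega) (by omega) (by omega) (by omega) (by omega)]
  norm_cast

lemma walk_structure {n n' m : ℕ} (wu1 : Fin m → Fin n → ℝ) (w12 : Fin n → Fin n' → ℝ)
    (w2u : Fin n' → Fin m → ℝ) (C : ℝ)
    (u : ℕ → WalkState n n' m) (h0 : u 0 = .one) (hT : u (m + 4) = .two)
    (hstep : ∀ t < m + 4, walkA wu1 w12 w2u C (u t) (u (t + 1)) ≠ ⊤) :
    ∃ (uu : Fin m) (x : Fin n) (y : Fin n'), ∀ t ≤ m + 4, u t = canonWalk uu x y t := by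
  classical
  -- no intermediate `two`
  have hnot2 : ∀ s < m + 4, u s ≠ .two := by
    intro s hs hc
    apply hstep s hs
    rw [hc]
    cases h' : u (s + 1) <;> simp [walkA]
  -- successor lemmas
  have step_one : ∀ t < m + 4, u t = .one →
      ∃ a : Fin m, u (t + 1) = .pu a ∧ (a : ℕ) = 0 := by
    intro t ht h
    have hs := hstep t ht
    rw [h] at hs
    cases h' : u (t + 1) <;> rw [h'] at hs <;> simp [walkA] at hs
    case pu a => exact ⟨a, rfl, hs⟩
  have step_pu : ∀ t < m + 4, ∀ a : Fin m, u t = .pu a →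
      (∃ a' : Fin m, u (t + 1) = .pu a' ∧ (a' : ℕ) = (a : ℕ) + 1) ∨
      (∃ x : Fin n, u (t + 1) = .v1 x) := by
    intro t ht a h
    have hs := hstep t ht
    rw [h] at hs
    cases h' : u (t + 1) <;> rw [h'] at hs <;> simp [walkA] at hs
    case pu a' => exact Or.inl ⟨a', rfl, hs⟩
    case v1 x => exact Or.inr ⟨x, rfl⟩
  have step_v1 : ∀ t < m + 4, ∀ x : Fin n, u t = .v1 x →
      ∃ y : Fin n', u (t + 1) = .v2 y := by
    intro t ht x h
    have hs := hstep t ht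
    rw [h] at hs
    cases h' : u (t + 1) <;> rw [h'] at hs <;> simp [walkA] at hs
    case v2 y => exact ⟨y, rfl⟩
  have step_v2 : ∀ t < m + 4, ∀ y : Fin n', u t = .v2 y →
      ∃ b : Fin m, u (t + 1) = .pu' b := by
    intro t ht y h
    have hs := hstep t ht
    rw [h] at hs
    cases h' : u (t + 1) <;> rw [h'] at hs <;> simp [walkA] at hs
    case pu' b => exact ⟨b, rfl⟩
  have step_pu' : ∀ t < m + 4, ∀ b : Fin m, u t = .pu' b →
      (∃ b' : Fin m, u (t + 1) = .pu' b' ∧ (b' : ℕ) = (b : ℕ) + 1) ∨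
      (u (t + 1) = .two ∧ (b : ℕ) = m - 1) := by
    intro t ht b h
    have hs := hstep t ht
    rw [h] at hs
    cases h' : u (t + 1) <;> rw [h'] at hs <;> simp [walkA] at hs
    case pu' b' => exact Or.inl ⟨b', rfl, hs⟩
    case two => exact Or.inr ⟨rfl, hs⟩
  -- the prefix predicate
  set Q : ℕ → Prop :=
    fun t => ∀ s, 1 ≤ s → s ≤ t → ∃ a : Fin m, u s = .pu a ∧ (a : ℕ) = s - 1 with hQ
  have hQ1 : Q 1 := by
    intro s hs1 hs2
    have hse : s = 1 := by omega
    subst hse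
    obtain ⟨a, ha, hav⟩ := step_one 0 (by omega) h0
    exact ⟨a, ha, by omega⟩
  have hex : ∃ k, k < m + 4 ∧ Q k ∧ ¬ Q (k + 1) := by
    by_contra hcon
    push_neg at hcon
    have hmono : ∀ t, t ≤ m + 4 → Q t := by
      intro t
      induction t with
      | zero => intro _ s hs1 hs2; omega
      | succ t ih =>
        intro ht
        exact hcon t (by omega) (ih (by omega))
    obtain ⟨a, ha, _⟩ := hmono (m + 4) le_rfl (m + 4) (by omega) le_rfl
    rw [hT] at ha
    cases ha
  obtain ⟨k, hk4, hQk, hnQ⟩ := hex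
  have hk1 : 1 ≤ k := by
    by_contra hc
    apply hnQ
    have : k = 0 := by omega
    subst this
    exact hQ1
  obtain ⟨a, ha, hav⟩ := hQk k hk1 le_rfl
  have hkm : k ≤ m := by have := a.isLt; omega
  -- step out of the pu chain
  have hv1 : ∃ x : Fin n, u (k + 1) = .v1 x := by
    rcases step_pu k hk4 a ha with ⟨a', ha', hav'⟩ | hx
    · exfalso
      apply hnQ
      intro s hs1 hs2
      rcases Nat.lt_or_ge s (k + 1) with h' | h'
      · exact hQk s hs1 (by omega)
      · have : s = k + 1 := by omega
        subst this
        exact ⟨a', ha', by omega⟩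
    · exact hx
  obtain ⟨x, hx⟩ := hv1
  obtain ⟨y, hy⟩ := step_v1 (k + 1) (by omega) x hx
  obtain ⟨b, hb⟩ := step_v2 (k + 2) (by omega) y hy
  -- the pu' chain
  have hchain : ∀ j, k + 3 + j ≤ m + 3 →
      ∃ c : Fin m, u (k + 3 + j) = .pu' c ∧ (c : ℕ) = (b : ℕ) + j := by
    intro j
    induction j with
    | zero => intro _; exact ⟨b, hb, by omega⟩
    | succ j ih =>
      intro hj
      obtain ⟨c, hc, hcv⟩ := ih (by omega)
      rcases step_pu' (k + 3 + j) (by omega) c hc with ⟨c', hc', hcv'⟩ | ⟨h2', _⟩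
      · exact ⟨c', by rw [show k + 3 + (j + 1) = k + 3 + j + 1 by ring]; exact hc',
          by omega⟩
      · exact absurd h2' (hnot2 (k + 3 + j + 1) (by omega))
  obtain ⟨c, hcm3, hcv⟩ := hchain (m - k) (by omega)
  rw [show k + 3 + (m - k) = m + 3 by omega] at hcm3
  -- final step
  have hcfin : (c : ℕ) = m - 1 := by
    rcases step_pu' (m + 3) (by omega) c hcm3 with ⟨c', hc', _⟩ | ⟨_, hv⟩
    · rw [show m + 3 + 1 = m + 4 by ring, hT] at hc'
      cases hc'
    · exact hv
  have hbv : (b : ℕ) = k - 1 := by have := b.isLt; omega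
  have hkb : k = (b : ℕ) + 1 := by omega
  refine ⟨b, x, y, ?_⟩
  intro t ht
  have hbm := b.isLt
  rcases Nat.lt_or_ge t 1 with hc | hc
  · have : t = 0 := by omega
    subst this
    rw [h0]; simp [canonWalk]
  · rcases Nat.lt_or_ge t (k + 1) with hc2 | hc2
    · -- 1 ≤ t ≤ k
      obtain ⟨a', ha', hav'⟩ := hQk t hc (by omega)
      rw [ha']
      simp only [canonWalk]
      rw [dif_neg (show ¬ t = 0 by omega), dif_pos (show t ≤ (b : ℕ) + 1 by omega)]
      congr 1
      apply Fin.ext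
      show (a' : ℕ) = t - 1
      omega
    · rcases Nat.eq_or_lt_of_le hc2 with hc3 | hc3
      · -- t = k + 1
        rw [← hc3, hx]
        simp only [canonWalk]
        rw [dif_neg (show ¬ k + 1 = 0 by omega),
          dif_neg (show ¬ k + 1 ≤ (b : ℕ) + 1 by omega),
          dif_pos (show k + 1 = (b : ℕ) + 2 by omega)]
      · rcases Nat.lt_or_ge t (k + 3) with hc4 | hc4
        · -- t = k + 2
          have hte : t = k + 2 := by omega
          subst hte
          rw [show u (k + 2) = WalkState.v2 y from hy]
          simp only [canonWalk]
          rw [dif_neg (show ¬ k + 2 = 0 by omega),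
            dif_neg (show ¬ k + 2 ≤ (b : ℕ) + 1 by omega),
            dif_neg (show ¬ k + 2 = (b : ℕ) + 2 by omega),
            dif_pos (show k + 2 = (b : ℕ) + 3 by omega)]
        · rcases Nat.lt_or_ge t (m + 4) with hc5 | hc5
          · -- k + 3 ≤ t ≤ m + 3
            obtain ⟨c', hc', hcv'⟩ := hchain (t - (k + 3)) (by omega)
            rw [show k + 3 + (t - (k + 3)) = t by omega] at hc'
            rw [hc']
            simp only [canonWalk]
            rw [dif_neg (show ¬ t = 0 by omega),
              dif_neg (show ¬ t ≤ (b : ℕ) + 1 by omega),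
              dif_neg (show ¬ t = (b : ℕ) + 2 by omega),
              dif_neg (show ¬ t = (b : ℕ) + 3 by omega),
              dif_pos (show t ≤ m + 3 by omega)]
            congr 1
            apply Fin.ext
            show (c' : ℕ) = t - 4
            omega
          · -- t = m + 4
            have : t = m + 4 := by omega
            subst this
            rw [hT]
            simp only [canonWalk]
            rw [dif_neg (show ¬ m + 4 = 0 by omega),
              dif_neg (show ¬ m + 4 ≤ (b : ℕ) + 1 by omega),
              dif_neg (show ¬ m + 4 = (b : ℕ) + 2 by omega),
              dif_neg (show ¬ m + 4 = (b : ℕ) + 3 by omega),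
              dif_neg (show ¬ m + 4 ≤ m + 3 by omega)]


/-- In the Shortest Walk reduction, every finite-weight walk of length `T = m + 4` from
node 1 to node 2 has weight `w(u,v₁) + w(v₁,v₂) + w(v₂,u) - C` for some triangle
`(u, v₁, v₂) ∈ U × V₁ × V₂`, every triangle gives such a walk, and hence the minimum
weight of such a walk equals the minimum triangle weight minus `C`. -/
theorem shortest_walk_reduction
    (n n' m : ℕ) (hm : 0 < m)
    (wu1 : Fin m → Fin n → ℝ) (w12 : Fin n → Fin n' → ℝ) (w2u : Fin n' → Fin m → ℝ)
    (hwu1 : ∀ u v, 0 < wu1 u v) (hw12 : ∀ v v', 0 < w12 v v')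
    (hw2u : ∀ v u, 0 < w2u v u) (C : ℝ) :
    (∀ u : ℕ → WalkState n n' m, u 0 = .one → u (m + 4) = .two →
        (∑ t ∈ Finset.range (m + 4), walkA wu1 w12 w2u C (u t) (u (t + 1))) ≠ ⊤ →
        ∃ (uu : Fin m) (x : Fin n) (y : Fin n'),
          (∑ t ∈ Finset.range (m + 4), walkA wu1 w12 w2u C (u t) (u (t + 1)))
            = ((wu1 uu x + w12 x y + w2u y uu - C : ℝ) : EReal)) ∧
    (∀ (uu : Fin m) (x : Fin n) (y : Fin n'),
        ∃ u : ℕ → WalkState n n' m, u 0 = .one ∧ u (m + 4) = .two ∧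
          (∑ t ∈ Finset.range (m + 4), walkA wu1 w12 w2u C (u t) (u (t + 1)))
            = ((wu1 uu x + w12 x y + w2u y uu - C : ℝ) : EReal)) ∧
    ((⨅ (u : ℕ → WalkState n n' m) (_ : u 0 = .one ∧ u (m + 4) = .two),
        ∑ t ∈ Finset.range (m + 4), walkA wu1 w12 w2u C (u t) (u (t + 1)))
      = ⨅ (uu : Fin m), ⨅ (x : Fin n), ⨅ (y : Fin n'),
          ((wu1 uu x + w12 x y + w2u y uu - C : ℝ) : EReal)) := by

  have part1 : ∀ u : ℕ → WalkState n n' m, u 0 = .one → u (m + 4) = .two →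
      (∑ t ∈ Finset.range (m + 4), walkA wu1 w12 w2u C (u t) (u (t + 1))) ≠ ⊤ →
      ∃ (uu : Fin m) (x : Fin n) (y : Fin n'),
        (∑ t ∈ Finset.range (m + 4), walkA wu1 w12 w2u C (u t) (u (t + 1)))
          = ((wu1 uu x + w12 x y + w2u y uu - C : ℝ) : EReal) := by
    intro u h0 hT hne
    have hstep := sum_terms_ne_top
      (fun t => walkA_ne_bot wu1 w12 w2u C (u t) (u (t + 1))) hne
    obtain ⟨uu, x, y, hcan⟩ := walk_structure wu1 w12 w2u C u h0 hT hstep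
    exact ⟨uu, x, y, sum_canon wu1 w12 w2u C uu x y u hcan⟩
  have part2 : ∀ (uu : Fin m) (x : Fin n) (y : Fin n'),
      ∃ u : ℕ → WalkState n n' m, u 0 = .one ∧ u (m + 4) = .two ∧
        (∑ t ∈ Finset.range (m + 4), walkA wu1 w12 w2u C (u t) (u (t + 1)))
          = ((wu1 uu x + w12 x y + w2u y uu - C : ℝ) : EReal) := by
    intro uu x y
    have huu := uu.isLt
    refine ⟨canonWalk uu x y, by simp [canonWalk], ?_,
      sum_canon wu1 w12 w2u C uu x y _ (fun t _ => rfl)⟩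
    simp only [canonWalk]
    rw [dif_neg (show ¬ m + 4 = 0 by omega),
      dif_neg (show ¬ m + 4 ≤ (uu : ℕ) + 1 by omega),
      dif_neg (show ¬ m + 4 = (uu : ℕ) + 2 by omega),
      dif_neg (show ¬ m + 4 = (uu : ℕ) + 3 by omega),
      dif_neg (show ¬ m + 4 ≤ m + 3 by omega)]
  refine ⟨part1, part2, le_antisymm ?_ ?_⟩
  · apply le_iInf; intro uu; apply le_iInf; intro x; apply le_iInf; intro y
    obtain ⟨u, h0, hT, hsum⟩ := part2 uu x y
    exact le_of_le_of_eq (iInf₂_le u ⟨h0, hT⟩) hsum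
  · apply le_iInf; intro u; apply le_iInf; intro hp
    by_cases hne : (∑ t ∈ Finset.range (m + 4), walkA wu1 w12 w2u C (u t) (u (t + 1))) = ⊤
    · rw [hne]; exact le_top
    · obtain ⟨uu, x, y, hsum⟩ := part1 u hp.1 hp.2 hne
      rw [hsum]
      exact iInf_le_of_le uu (iInf_le_of_le x (iInf_le _ y))
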